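/- Let q be a prime power and let k ≥ 1, d ≥ 1 be natural numbers. Then q^{2k} · |{z ∈ F_q^{d+1} : Z^{-1}(z) = ∅}| ≤ d^{2k} · q^{2(d+1)}. Equivalently, the number of z ∈ F_q^{d+1} not in the range of Z is at most d^{2k} q^{2(d+1)-2k}. -/

import Mathlib

open Finset Module

section helpers

variable {F : Type*} [Field F] [Fintype F] [DecidableEq F]

omit [Fintype F] [DecidableEq F] in
lemma vand_indep (d m : ℕ) (hm : m ≤ d + 1) (a : Fin m → F) (ha : Function.Injective a) :
    LinearIndependent F (fun i : Fin m => fun j : Fin (d + 1) => a i ^ (j : ℕ)) := by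
  have hA : LinearIndependent F (fun i : Fin m => (Matrix.vandermonde a) i) := by
    change LinearIndependent F (Matrix.vandermonde a).row
    rw [Matrix.linearIndependent_rows_iff_isUnit, Matrix.isUnit_iff_isUnit_det,
      Matrix.det_vandermonde, isUnit_iff_ne_zero]
    apply Finset.prod_ne_zero_iff.2
    intro i _
    apply Finset.prod_ne_zero_iff.2
    intro j hj
    rw [Finset.mem_Ioi] at hj
    exact sub_ne_zero.2 fun h => absurd (ha h) (ne_of_gt hj)
  let π : (Fin (d + 1) → F) →ₗ[F] (Fin m → F) := LinearMap.funLeft F F (Fin.castLE hm)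
  apply LinearIndependent.of_comp π
  convert hA with i j
  rfl

lemma ker_card_le (d : ℕ) {ι : Type*} [Fintype ι] [DecidableEq ι] (t : ι → F) :
    (Finset.univ.filter fun w : ι → F => ∀ j : Fin (d + 1), ∑ i, w i * t i ^ (j : ℕ) = 0).card
      ≤ Fintype.card F ^ (Fintype.card ι - min (Finset.image t Finset.univ).card (d + 1)) := by
  classical
  set D := (Finset.image t Finset.univ).card with hD
  set m := min D (d + 1) with hmdef
  let A : Matrix ι (Fin (d + 1)) F := fun i j => t i ^ (j : ℕ)
  let L : (ι → F) →ₗ[F] (Fin (d + 1) → F) := A.vecMulLinear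
  have hLapp : ∀ w j, L w j = ∑ i, w i * t i ^ (j : ℕ) := by
    intro w j
    show Matrix.vecMul w A j = _
    simp [L, Matrix.vecMulLinear_apply, Matrix.vecMul, dotProduct, A]
  have hcard : (Finset.univ.filter fun w : ι → F =>
      ∀ j : Fin (d + 1), ∑ i, w i * t i ^ (j : ℕ) = 0).card
      = Fintype.card ↥(LinearMap.ker L) := by
    rw [← Fintype.card_subtype]
    apply Fintype.card_congr
    apply Equiv.subtypeEquivRight
    intro w
    rw [LinearMap.mem_ker]
    constructor
    · intro h; funext j; rw [hLapp]; exact h j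
    · intro h j; rw [← hLapp, h]; rfl
  rw [hcard, card_eq_pow_finrank (K := F)]
  apply Nat.pow_le_pow_right Fintype.card_pos
  have hrn := LinearMap.finrank_range_add_finrank_ker L
  have hpi : finrank F (ι → F) = Fintype.card ι := Module.finrank_pi F
  have hrange : m ≤ finrank F ↥(LinearMap.range L) := by
    obtain ⟨s, hs, hscard⟩ := Finset.exists_subset_card_eq (s := Finset.image t Finset.univ)
      (min_le_left D (d + 1))
    let a : Fin m → F := fun i => (s.equivFin.symm (Fin.cast hscard.symm i) : F)
    have ha : Function.Injective a := by
      intro i1 i2 h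
      have h2 := s.equivFin.symm.injective (Subtype.ext h)
      simpa [Fin.ext_iff] using h2
    have hmem : ∀ i : Fin m, (fun j : Fin (d + 1) => a i ^ (j : ℕ)) ∈ LinearMap.range L := by
      intro i
      have : a i ∈ Finset.image t Finset.univ := hs (s.equivFin.symm (Fin.cast hscard.symm i)).2
      obtain ⟨i₀, _, hti₀⟩ := Finset.mem_image.1 this
      refine ⟨Pi.single i₀ (1 : F), ?_⟩
      funext j
      rw [hLapp]
      simp [Pi.single_apply, hti₀]
    let v : Fin m → ↥(LinearMap.range L) := fun i => ⟨_, hmem i⟩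
    have hv : LinearIndependent F v := by
      apply LinearIndependent.of_comp (LinearMap.range L).subtype
      exact vand_indep d m (min_le_right D (d + 1)) a ha
    simpa using hv.fintype_card_le_finrank
  rw [hpi] at hrn
  have h9 : finrank F ↥(LinearMap.range L) + finrank F ↥(LinearMap.ker L) = Fintype.card ι := hrn
  have h8 : m ≤ finrank F ↥(LinearMap.range L) := hrange
  clear hrn hrange hpi hcard hLapp
  omega

end helpers

section helpers2

lemma card_filter_not_lt (n D : ℕ) (hD : D ≤ n) :
    ((Finset.univ : Finset (Fin n)).filter fun i : Fin n => ¬ ((i : ℕ) < D)).card = n - D := by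
  rw [show n - D = (Finset.univ : Finset (Fin (n - D))).card by simp]
  apply Finset.card_bij' (i := fun (a : Fin n) (ha : a ∈ _) => ((⟨(a : ℕ) - D, by
      simp only [Finset.mem_filter, Finset.mem_univ, true_and, not_lt] at ha
      have := a.isLt; omega⟩ : Fin (n - D))))
    (j := fun (b : Fin (n - D)) (_ : b ∈ Finset.univ) => (⟨D + (b : ℕ), by omega⟩ : Fin n))
  · intro a ha
    simp only [Finset.mem_filter, Finset.mem_univ, true_and, not_lt] at ha
    ext; simp; omega
  · intro b hb
    ext; simp
  · intro a ha; exact Finset.mem_univ _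
  · intro b hb
    simp only [Finset.mem_filter, Finset.mem_univ, true_and, not_lt]
    simp

lemma sum_bound {F : Type*} [Fintype F] [DecidableEq F] [Zero F] {ι : Type*} [Fintype ι]
    [DecidableEq ι] (d : ℕ) :
    ∑ t ∈ Finset.univ.filter (fun t : ι → F => (Finset.image t Finset.univ).card ≤ d),
      Fintype.card F ^ (Fintype.card ι - (Finset.image t Finset.univ).card)
      ≤ d ^ Fintype.card ι * Fintype.card F ^ Fintype.card ι := by
  classical
  set q := Fintype.card F with hq
  set n := Fintype.card ι with hn
  set D : (ι → F) → ℕ := fun t => (Finset.image t Finset.univ).card with hDdef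
  have hDle : ∀ t : ι → F, D t ≤ n := fun t => le_trans Finset.card_image_le (by simp [hn])
  set T := Finset.univ.filter (fun t : ι → F => D t ≤ d) with hT
  show ∑ t ∈ T, q ^ (n - D t) ≤ d ^ n * q ^ n
  set B : Finset ((ι → F) × (Fin n → F)) :=
    Finset.univ.filter (fun p => D p.1 ≤ d ∧
      ∀ i : Fin n, (i : ℕ) < D p.1 → p.2 i = 0) with hB
  -- Step A : the sum equals B.card
  have hA : B.card = ∑ t ∈ T, q ^ (n - D t) := by
    rw [Finset.card_eq_sum_card_fiberwise (f := Prod.fst) (t := T)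
      (fun p hp => by simp only [hB, Finset.mem_coe, Finset.mem_filter, Finset.mem_univ, true_and] at hp
                      simp only [hT, Finset.mem_coe, Finset.mem_filter, Finset.mem_univ, true_and]
                      exact hp.1)]
    apply Finset.sum_congr rfl
    intro t ht
    have h1 : (B.filter fun p => p.1 = t).card
        = (Finset.univ.filter fun u : Fin n → F => ∀ i : Fin n, (i : ℕ) < D t → u i = 0).card := by
      apply Finset.card_bij' (i := fun p _ => p.2) (j := fun u _ => (t, u))
      · intro p hp
        have hp1 := (Finset.mem_filter.1 hp).1
        have hp2 := (Finset.mem_filter.1 hp).2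
        simp only [hB, Finset.mem_filter, Finset.mem_univ, true_and] at hp1
        simp only [Finset.mem_filter, Finset.mem_univ, true_and]
        intro i hi
        exact hp1.2 i (by rwa [hp2])
      · intro u hu
        have hu2 := (Finset.mem_filter.1 hu).2
        exact Prod.ext hu2.symm rfl
      · intro p hp; rfl
      · intro u hu
        simp only [hT, Finset.mem_filter, Finset.mem_univ, true_and] at ht
        simp only [Finset.mem_filter, Finset.mem_univ, true_and] at hu
        simp only [Finset.mem_filter, hB, Finset.mem_univ, true_and]
        exact ⟨⟨ht, fun i hi => hu i hi⟩, trivial⟩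
    rw [h1]
    have h2 : (Finset.univ.filter fun u : Fin n → F => ∀ i : Fin n, (i : ℕ) < D t → u i = 0)
        = Fintype.piFinset (fun i : Fin n =>
            if (i : ℕ) < D t then ({0} : Finset F) else Finset.univ) := by
      ext u
      simp only [Finset.mem_filter, Finset.mem_univ, true_and, Fintype.mem_piFinset]
      constructor
      · intro h i
        by_cases hi : (i : ℕ) < D t
        · simp [hi, h i hi]
        · simp [hi]
      · intro h i hi
        have := h i
        simp [hi] at this
        exact this
    rw [h2, Fintype.card_piFinset]
    have h3 : ∀ i : Fin n, (if (i : ℕ) < D t then ({0} : Finset F) else Finset.univ).card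
        = if (i : ℕ) < D t then 1 else q := by
      intro i; split <;> simp [hq]
    rw [Finset.prod_congr rfl (fun i _ => h3 i), Finset.prod_ite, Finset.prod_const,
      Finset.prod_const, one_pow, one_mul, card_filter_not_lt n (D t) (hDle t)]
  -- Step B : injection
  have hBle : B.card ≤ d ^ n * q ^ n := by
    have htarget : ((Fintype.piFinset (fun _ : ι => Finset.range d)) ×ˢ
        (Finset.univ : Finset (Fin n → F))).card = d ^ n * q ^ n := by
      rw [Finset.card_product, Fintype.card_piFinset]
      simp [hq, hn, Finset.card_univ]
    rw [← htarget]
    set Φ : ((ι → F) × (Fin n → F)) → ((ι → ℕ) × (Fin n → F)) := fun p =>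
      (fun i => ((Finset.image p.1 Finset.univ).equivFin
          ⟨p.1 i, Finset.mem_image_of_mem _ (Finset.mem_univ i)⟩ : ℕ),
       fun j : Fin n => if h : (j : ℕ) < D p.1
          then ((Finset.image p.1 Finset.univ).equivFin.symm ⟨(j : ℕ), h⟩ : F)
          else p.2 j) with hΦ
    apply Finset.card_le_card_of_injOn Φ
    · intro p hp
      simp only [hB, Finset.mem_coe, Finset.mem_filter, Finset.mem_univ, true_and] at hp
      simp only [Finset.mem_coe, Finset.mem_product, Fintype.mem_piFinset, Finset.mem_range, Finset.mem_univ,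
        and_true, hΦ]
      intro i
      exact lt_of_lt_of_le (Fin.isLt _) hp.1
    · -- injectivity
      intro p hp p' hp' heq
      simp only [hB, Finset.coe_filter, Set.mem_setOf_eq, Finset.mem_univ, true_and] at hp hp'
      obtain ⟨hpd, hpu⟩ := hp
      obtain ⟨hpd', hpu'⟩ := hp'
      have hf := congrArg Prod.fst heq
      have hv := congrArg Prod.snd heq
      simp only [hΦ] at hf hv
      -- the image of the first component determines D
      have himg : ∀ (r : (ι → F) × (Fin n → F)),
          Finset.image (fun i => ((Finset.image r.1 Finset.univ).equivFin
            ⟨r.1 i, Finset.mem_image_of_mem _ (Finset.mem_univ i)⟩ : ℕ)) Finset.univ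
          = Finset.image (fun x : Fin (D r.1) => (x : ℕ)) Finset.univ := by
        intro r
        apply Finset.Subset.antisymm
        · intro x hx
          simp only [Finset.mem_image, Finset.mem_univ, true_and] at hx ⊢
          obtain ⟨i, hi⟩ := hx
          exact ⟨_, hi⟩
        · intro x hx
          simp only [Finset.mem_image, Finset.mem_univ, true_and] at hx ⊢
          obtain ⟨y, hy⟩ := hx
          obtain ⟨i, _, hi⟩ := Finset.mem_image.1
            (Finset.coe_mem ((Finset.image r.1 Finset.univ).equivFin.symm y))
          refine ⟨i, ?_⟩
          have : (⟨r.1 i, Finset.mem_image_of_mem _ (Finset.mem_univ i)⟩ :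
              {x // x ∈ Finset.image r.1 Finset.univ})
              = (Finset.image r.1 Finset.univ).equivFin.symm y := Subtype.ext hi
          rw [this, Equiv.apply_symm_apply, hy]
      have hDeq : D p.1 = D p'.1 := by
        have h1 := himg p
        have h2 := himg p'
        rw [hf] at h1
        rw [h1] at h2
        have c1 : (Finset.image (fun x : Fin (D p.1) => (x : ℕ)) Finset.univ).card = D p.1 := by
          rw [Finset.card_image_of_injective _ Fin.val_injective]; simp
        have c2 : (Finset.image (fun x : Fin (D p'.1) => (x : ℕ)) Finset.univ).card = D p'.1 := by
          rw [Finset.card_image_of_injective _ Fin.val_injective]; simp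
        rw [← c1, ← c2, h2]
      -- recover t
      have ht : p.1 = p'.1 := by
        funext i
        have hfi := congrFun hf i
        have lt1 : (((Finset.image p.1 Finset.univ).equivFin
            ⟨p.1 i, Finset.mem_image_of_mem _ (Finset.mem_univ i)⟩ : Fin (D p.1)) : ℕ) < n :=
          lt_of_lt_of_le (Fin.isLt _) (hDle p.1)
        have hvv := congrFun hv (⟨_, lt1⟩ : Fin n)
        simp only at hvv
        have c1 : ((⟨(((Finset.image p.1 Finset.univ).equivFin
            ⟨p.1 i, Finset.mem_image_of_mem _ (Finset.mem_univ i)⟩ : Fin (D p.1)) : ℕ), lt1⟩ :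
            Fin n) : ℕ) < D p.1 := by
          exact Fin.isLt ((Finset.image p.1 Finset.univ).equivFin
            ⟨p.1 i, Finset.mem_image_of_mem _ (Finset.mem_univ i)⟩)
        have c2 : ((⟨(((Finset.image p.1 Finset.univ).equivFin
            ⟨p.1 i, Finset.mem_image_of_mem _ (Finset.mem_univ i)⟩ : Fin (D p.1)) : ℕ), lt1⟩ :
            Fin n) : ℕ) < D p'.1 := by
          have h2 := Fin.isLt ((Finset.image p'.1 Finset.univ).equivFin
            ⟨p'.1 i, Finset.mem_image_of_mem _ (Finset.mem_univ i)⟩)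
          have h3 := congrFun hf i
          omega
        rw [dif_pos c1, dif_pos c2] at hvv
        have r1 : (⟨((⟨_, lt1⟩ : Fin n) : ℕ), c1⟩ : Fin (D p.1))
            = (Finset.image p.1 Finset.univ).equivFin
              ⟨p.1 i, Finset.mem_image_of_mem _ (Finset.mem_univ i)⟩ := by
          apply Fin.ext; rfl
        have r2 : (⟨((⟨_, lt1⟩ : Fin n) : ℕ), c2⟩ : Fin (D p'.1))
            = (Finset.image p'.1 Finset.univ).equivFin
              ⟨p'.1 i, Finset.mem_image_of_mem _ (Finset.mem_univ i)⟩ := by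
          apply Fin.ext
          simpa using hfi
        rw [r1, r2, Equiv.symm_apply_apply, Equiv.symm_apply_apply] at hvv
        exact hvv
      -- recover u
      have hu : p.2 = p'.2 := by
        funext j
        by_cases hj : (j : ℕ) < D p.1
        · rw [hpu j hj, hpu' j (hDeq ▸ hj)]
        · have w1 := congrFun hv j
          rw [dif_neg hj, dif_neg (hDeq ▸ hj)] at w1
          exact w1
      exact Prod.ext ht hu
  exact hA ▸ hBle

end helpers2

/-- Let `q` be a prime power (`F` the finite field with `q` elements) and
`k ≥ 1, d ≥ 1`.  Then `q^{2k} · |{z ∈ F_q^{d+1} : Z⁻¹(z) = ∅}| ≤ d^{2k} · q^{2(d+1)}`,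
i.e. the number of `z` not in the range of `Z` is at most `d^{2k} q^{2(d+1)-2k}`. -/
theorem stmt_5 (F : Type*) [Field F] [Fintype F] (k d : ℕ) (hk : 1 ≤ k) (hd : 1 ≤ d) :
    Fintype.card F ^ (2 * k) *
      Set.ncard {z : Fin (d + 1) → F |
        z ∉ Set.range (fun xy : (Fin k → F) × (Fin k → F) =>
          fun j : Fin (d + 1) => ∑ i, xy.2 i * xy.1 i ^ (j : ℕ))} ≤
      d ^ (2 * k) * Fintype.card F ^ (2 * (d + 1)) := by
  classical
  set q := Fintype.card F with hq
  have hq2 : 2 ≤ q := Fintype.one_lt_card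
  set Z : (Fin k → F) × (Fin k → F) → (Fin (d + 1) → F) := fun xy =>
    fun j : Fin (d + 1) => ∑ i, xy.2 i * xy.1 i ^ (j : ℕ) with hZ
  -- convert ncard to a Finset card
  set U := (Finset.univ.filter fun z : Fin (d + 1) → F => ¬ ∃ p, Z p = z).card with hU
  have hncard : {z : Fin (d + 1) → F | z ∉ Set.range Z}.ncard = U := by
    rw [show {z : Fin (d + 1) → F | z ∉ Set.range Z}
        = ↑(Finset.univ.filter fun z : Fin (d + 1) → F => ¬ ∃ p, Z p = z) by
      ext z; simp [Set.range]]
    rw [Set.ncard_coe_finset]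
  rw [hncard]
  have hzcard : Fintype.card (Fin (d + 1) → F) = q ^ (d + 1) := by
    rw [Fintype.card_fun]; simp [hq]
  have hUle : U ≤ q ^ (d + 1) := by
    calc U ≤ (Finset.univ : Finset (Fin (d + 1) → F)).card := Finset.card_filter_le _ _
    _ = q ^ (d + 1) := by rw [Finset.card_univ, hzcard]
  by_cases hcase : 2 * k ≤ d + 1
  · -- trivial case
    calc q ^ (2 * k) * U ≤ q ^ (d + 1) * q ^ (d + 1) :=
          Nat.mul_le_mul (Nat.pow_le_pow_right (by omega) hcase) hUle
    _ = q ^ (2 * (d + 1)) := by ring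
    _ ≤ d ^ (2 * k) * q ^ (2 * (d + 1)) := Nat.le_mul_of_pos_left _ (pow_pos hd _)
  · -- main case : 2k ≥ d + 2
    push_neg at hcase
    have hkd : d + 2 ≤ 2 * k := hcase
    set ι := (Fin k ⊕ Fin k) with hι
    have hcardι : Fintype.card ι = 2 * k := by simp [hι, two_mul]
    set N : (Fin (d + 1) → F) → ℕ := fun z => (Finset.univ.filter fun p => Z p = z).card with hN
    -- total count
    have hsum : ∑ z, N z = q ^ (2 * k) := by
      rw [← Finset.card_eq_sum_card_fiberwise (f := Z) (t := Finset.univ) (fun p _ => Finset.mem_univ _)]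
      rw [Finset.card_univ, Fintype.card_prod, Fintype.card_fun]
      simp [two_mul, pow_add, hq]
    -- second moment
    have hsq : ∑ z, (N z) ^ 2 ≤ q ^ (2 * k) * q ^ (2 * k - (d + 1)) + d ^ (2 * k) * q ^ (2 * k) := by
      -- (a) sum of squares = number of collision pairs
      have ha : (Finset.univ.filter fun pp : ((Fin k → F) × (Fin k → F)) × ((Fin k → F) × (Fin k → F)) => Z pp.1 = Z pp.2).card
          = ∑ z, (N z) ^ 2 := by
        rw [Finset.card_eq_sum_card_fiberwise (f := fun pp : ((Fin k → F) × (Fin k → F)) × ((Fin k → F) × (Fin k → F)) => Z pp.1) (t := Finset.univ)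
          (fun _ _ => Finset.mem_univ _)]
        apply Finset.sum_congr rfl
        intro z _
        rw [Finset.filter_filter]
        have hprod : (Finset.univ.filter fun pp : ((Fin k → F) × (Fin k → F)) × ((Fin k → F) × (Fin k → F)) => Z pp.1 = Z pp.2 ∧ Z pp.1 = z)
            = (Finset.univ.filter fun p : (Fin k → F) × (Fin k → F) => Z p = z) ×ˢ
              (Finset.univ.filter fun p : (Fin k → F) × (Fin k → F) => Z p = z) := by
          ext pp
          simp only [Finset.mem_filter, Finset.mem_univ, true_and, Finset.mem_product]
          constructor
          · rintro ⟨h1, h2⟩; exact ⟨h2, h1 ▸ h2⟩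
          · rintro ⟨h1, h2⟩; exact ⟨h1.trans h2.symm, h1⟩
        rw [hprod, Finset.card_product, sq]
      -- (b) collision pairs = signed-moment-zero pairs on the sum type
      have hb : (Finset.univ.filter fun pp : ((Fin k → F) × (Fin k → F)) × ((Fin k → F) × (Fin k → F)) => Z pp.1 = Z pp.2).card
          = (Finset.univ.filter fun tw : (ι → F) × (ι → F) =>
              ∀ j : Fin (d + 1), ∑ i, tw.2 i * tw.1 i ^ (j : ℕ) = 0).card := by
        apply Finset.card_bij'
          (i := fun pp _ => ((Sum.elim pp.1.1 pp.2.1 : ι → F),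
            (Sum.elim pp.1.2 (fun i => - pp.2.2 i) : ι → F)))
          (j := fun tw _ => (((tw.1 ∘ Sum.inl, tw.2 ∘ Sum.inl) : (Fin k → F) × (Fin k → F)),
            ((tw.1 ∘ Sum.inr, fun i => - tw.2 (Sum.inr i)) : (Fin k → F) × (Fin k → F))))
        case hi =>
          intro pp hpp
          simp only [Finset.mem_filter, Finset.mem_univ, true_and] at hpp ⊢
          intro j
          rw [Fintype.sum_sum_type]
          simp only [Sum.elim_inl, Sum.elim_inr, neg_mul, Finset.sum_neg_distrib]
          have := congrFun hpp j
          simp only [hZ] at this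
          linear_combination this
        case left_inv =>
          rintro ⟨⟨x1, y1⟩, ⟨x2, y2⟩⟩ _
          refine Prod.ext (Prod.ext ?_ ?_) (Prod.ext ?_ ?_) <;> simp
        case right_inv =>
          rintro ⟨t, w⟩ _
          refine Prod.ext ?_ ?_ <;> funext x <;> cases x <;> simp
        case hj =>
          intro tw htw
          simp only [Finset.mem_filter, Finset.mem_univ, true_and] at htw ⊢
          funext j
          simp only [hZ]
          have := htw j
          rw [Fintype.sum_sum_type] at this
          simp only [Function.comp, neg_mul, Finset.sum_neg_distrib] at this ⊢
          linear_combination this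
      -- (c) fiber over t
      have hc : (Finset.univ.filter fun tw : (ι → F) × (ι → F) =>
              ∀ j : Fin (d + 1), ∑ i, tw.2 i * tw.1 i ^ (j : ℕ) = 0).card
          = ∑ t : ι → F, (Finset.univ.filter fun w : ι → F =>
              ∀ j : Fin (d + 1), ∑ i, w i * t i ^ (j : ℕ) = 0).card := by
        rw [Finset.card_eq_sum_card_fiberwise (f := Prod.fst) (t := Finset.univ)
          (fun _ _ => Finset.mem_univ _)]
        apply Finset.sum_congr rfl
        intro t _
        apply Finset.card_bij' (i := fun tw _ => tw.2) (j := fun w _ => (t, w))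
        case hi =>
          intro tw htw
          simp only [Finset.mem_filter, Finset.mem_univ, true_and] at htw ⊢
          obtain ⟨h1, h2⟩ := htw
          intro j
          rw [← h2]
          exact h1 j
        case left_inv =>
          intro tw htw
          simp only [Finset.mem_filter] at htw
          exact Prod.ext htw.2.symm rfl
        case right_inv =>
          intro w hw; rfl
        case hj =>
          intro w hw
          simp only [Finset.mem_filter, Finset.mem_univ, true_and] at hw ⊢
          exact ⟨fun j => hw j, trivial⟩
      rw [← ha, hb, hc]
      -- (d) kernel bound for each t  (e) split the sum
      have hd1 : ∀ t : ι → F, (Finset.univ.filter fun w : ι → F =>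
            ∀ j : Fin (d + 1), ∑ i, w i * t i ^ (j : ℕ) = 0).card
          ≤ q ^ (2 * k - min (Finset.image t Finset.univ).card (d + 1)) := by
        intro t
        have := ker_card_le d t
        rwa [hcardι] at this
      calc ∑ t : ι → F, (Finset.univ.filter fun w : ι → F =>
              ∀ j : Fin (d + 1), ∑ i, w i * t i ^ (j : ℕ) = 0).card
          ≤ ∑ t : ι → F, q ^ (2 * k - min (Finset.image t Finset.univ).card (d + 1)) :=
            Finset.sum_le_sum (fun t _ => hd1 t)
      _ = (∑ t ∈ Finset.univ.filter (fun t : ι → F => (Finset.image t Finset.univ).card ≤ d),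
              q ^ (2 * k - min (Finset.image t Finset.univ).card (d + 1)))
          + ∑ t ∈ Finset.univ.filter (fun t : ι → F => ¬ (Finset.image t Finset.univ).card ≤ d),
              q ^ (2 * k - min (Finset.image t Finset.univ).card (d + 1)) :=
            (Finset.sum_filter_add_sum_filter_not _ _ _).symm
      _ ≤ d ^ (2 * k) * q ^ (2 * k) + q ^ (2 * k) * q ^ (2 * k - (d + 1)) := by
            apply Nat.add_le_add
            · have heq : ∀ t ∈ Finset.univ.filter
                  (fun t : ι → F => (Finset.image t Finset.univ).card ≤ d),
                  q ^ (2 * k - min (Finset.image t Finset.univ).card (d + 1))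
                  = q ^ (2 * k - (Finset.image t Finset.univ).card) := by
                intro t ht
                simp only [Finset.mem_filter, Finset.mem_univ, true_and] at ht
                rw [min_eq_left (Nat.le_succ_of_le ht)]
              rw [Finset.sum_congr rfl heq]
              have := sum_bound (F := F) (ι := ι) d
              rwa [hcardι] at this
            · have heq : ∀ t ∈ Finset.univ.filter
                  (fun t : ι → F => ¬ (Finset.image t Finset.univ).card ≤ d),
                  q ^ (2 * k - min (Finset.image t Finset.univ).card (d + 1))
                  = q ^ (2 * k - (d + 1)) := by
                intro t ht
                simp only [Finset.mem_filter, Finset.mem_univ, true_and, not_le] at ht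
                rw [min_eq_right ht]
              rw [Finset.sum_congr rfl heq, Finset.sum_const, smul_eq_mul]
              apply Nat.mul_le_mul_right
              calc (Finset.univ.filter
                    (fun t : ι → F => ¬ (Finset.image t Finset.univ).card ≤ d)).card
                  ≤ (Finset.univ : Finset (ι → F)).card := Finset.card_filter_le _ _
              _ = q ^ (2 * k) := by
                  rw [Finset.card_univ, Fintype.card_fun, hcardι]
      _ = q ^ (2 * k) * q ^ (2 * k - (d + 1)) + d ^ (2 * k) * q ^ (2 * k) := by ring
    -- zero set
    have hUzero : (Finset.univ.filter fun z : Fin (d + 1) → F => N z = 0).card = U := by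
      congr 1
      apply Finset.filter_congr
      intro z _
      simp only [hN, Finset.card_eq_zero, Finset.filter_eq_empty_iff]
      constructor
      · intro h ⟨p, hp⟩; exact h (Finset.mem_univ p) hp
      · intro h p _ hp; exact h ⟨p, hp⟩
    -- variance argument over ℤ
    set M : ℤ := (q : ℤ) ^ (2 * k - (d + 1)) with hM
    have key : (U : ℤ) * M ^ 2 ≤ ∑ z, ((N z : ℤ) - M) ^ 2 := by
      rw [← hUzero]
      have e0 : ∑ z ∈ (Finset.univ.filter fun z : Fin (d + 1) → F => N z = 0),
          ((N z : ℤ) - M) ^ 2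
          = ((Finset.univ.filter fun z : Fin (d + 1) → F => N z = 0).card : ℤ) * M ^ 2 := by
        rw [Finset.sum_congr rfl (fun z hz => show ((N z : ℤ) - M) ^ 2 = M ^ 2 by
          rw [(Finset.mem_filter.1 hz).2]; push_cast; ring)]
        rw [Finset.sum_const, nsmul_eq_mul]
      rw [← e0]
      exact Finset.sum_le_sum_of_subset_of_nonneg (Finset.filter_subset _ _)
        (fun z _ _ => sq_nonneg _)
    have expand : ∑ z, ((N z : ℤ) - M) ^ 2
        = (∑ z, (N z : ℤ) ^ 2) - (q : ℤ) ^ (2 * k) * M := by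
      have e1 : ∀ z : Fin (d + 1) → F, ((N z : ℤ) - M) ^ 2
          = (N z : ℤ) ^ 2 - 2 * M * (N z : ℤ) + M ^ 2 := fun z => by ring
      rw [Finset.sum_congr rfl fun z _ => e1 z]
      rw [Finset.sum_add_distrib, Finset.sum_sub_distrib, Finset.sum_const, nsmul_eq_mul,
        ← Finset.mul_sum, Finset.card_univ, hzcard]
      have hsum' : (∑ z, (N z : ℤ)) = (q : ℤ) ^ (2 * k) := by
        exact_mod_cast congrArg (Nat.cast : ℕ → ℤ) hsum
      rw [hsum']
      have hMM : ((q : ℤ) ^ (d + 1)) * M ^ 2 = (q : ℤ) ^ (2 * k) * M := by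
        rw [hM, ← pow_add, sq, ← pow_add, ← pow_add]
        congr 1
        omega
      push_cast
      rw [hMM]
      ring
    -- combine
    have hfinal : (U : ℤ) * M ^ 2 ≤ (d : ℤ) ^ (2 * k) * (q : ℤ) ^ (2 * k) := by
      calc (U : ℤ) * M ^ 2 ≤ ∑ z, ((N z : ℤ) - M) ^ 2 := key
      _ = (∑ z, (N z : ℤ) ^ 2) - (q : ℤ) ^ (2 * k) * M := expand
      _ ≤ ((q ^ (2 * k) * q ^ (2 * k - (d + 1)) + d ^ (2 * k) * q ^ (2 * k) : ℕ) : ℤ)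
            - (q : ℤ) ^ (2 * k) * M := by
            apply sub_le_sub_right
            calc (∑ z, (N z : ℤ) ^ 2) = ((∑ z, (N z) ^ 2 : ℕ) : ℤ) := by push_cast; rfl
            _ ≤ _ := by exact_mod_cast hsq
      _ = (d : ℤ) ^ (2 * k) * (q : ℤ) ^ (2 * k) := by push_cast [hM]; ring
    -- back to ℕ
    have hnat : U * q ^ ((2 * k - (d + 1)) * 2) ≤ d ^ (2 * k) * q ^ (2 * k) := by
      have := hfinal
      rw [hM, ← pow_mul] at this
      exact_mod_cast this
    -- final multiplication
    have hmul : U * q ^ (4 * k) ≤ d ^ (2 * k) * q ^ (2 * k) * q ^ (2 * (d + 1)) := by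
      calc U * q ^ (4 * k) = U * q ^ ((2 * k - (d + 1)) * 2) * q ^ (2 * (d + 1)) := by
            rw [mul_assoc, ← pow_add]
            congr 2
            omega
      _ ≤ d ^ (2 * k) * q ^ (2 * k) * q ^ (2 * (d + 1)) :=
            Nat.mul_le_mul_right _ hnat
    refine Nat.le_of_mul_le_mul_right ?_ (pow_pos (show 0 < q by omega) (2 * k))
    · calc q ^ (2 * k) * U * q ^ (2 * k) = U * q ^ (4 * k) := by
            rw [mul_comm (q ^ (2*k)) U, mul_assoc, ← pow_add]
            congr 2
            omega
      _ ≤ d ^ (2 * k) * q ^ (2 * k) * q ^ (2 * (d + 1)) := hmul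
      _ = d ^ (2 * k) * q ^ (2 * (d + 1)) * q ^ (2 * k) := by ring
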